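/- Let {A_k} be a sequence of convex bodies in ℝⁿ with λₙ(A_k) → ∞ and W_{n−1}(A_k) = O(λₙ(A_k)^{1/n}), and suppose additionally W_{n−j}(A_k) ≤ c_j · W_{n−1}(A_k)^{j} for constants c_j (0 ≤ j ≤ n). Fix L > 0 and let C_k ⊆ A_k + √n·L·B₁(0) be convex bodies containing A_k. Then |λₙ(C_k) − λₙ(A_k)| = O(λₙ(A_k)^{(n−1)/n}) and consequently λₙ(C_k)/λₙ(A_k) → 1 as k → ∞. -/

import Mathlib

open MeasureTheory Filter
open scoped Pointwise

/-- Volume comparison along a convex averaging sequence: if the convex bodies `A k` have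
volume tending to infinity, quermassintegrals `W i k` satisfying a Steiner-type bound,
`W_{n-1}(A_k) = O(λₙ(A_k)^{1/n})` and the Aleksandrov–Fenchel-type bounds
`W_{n-j}(A_k) ≤ c_j W_{n-1}(A_k)^j`, and `A k ⊆ C k ⊆ A k + √n·L·B₁(0)`, then
`|λₙ(C_k) − λₙ(A_k)| = O(λₙ(A_k)^{(n-1)/n})` and `λₙ(C_k)/λₙ(A_k) → 1`. -/
theorem stmt9 (n : ℕ) (hn : 1 ≤ n)
    (A Ck : ℕ → Set (EuclideanSpace ℝ (Fin n)))
    (W : ℕ → ℕ → ℝ)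
    (hAconv : ∀ k, Convex ℝ (A k)) (hAcomp : ∀ k, IsCompact (A k))
    (hAne : ∀ k, (A k).Nonempty)
    (hWnonneg : ∀ i k, 0 ≤ W i k)
    (hSteiner : ∀ k, ∀ δ : ℝ, 0 ≤ δ →
      (volume (A k + δ • Metric.closedBall (0 : EuclideanSpace ℝ (Fin n)) 1)).toReal
        ≤ (volume (A k)).toReal + ∑ i ∈ Finset.Icc 1 n, (n.choose i : ℝ) * W i k * δ ^ i)
    (hvol : Tendsto (fun k => (volume (A k)).toReal) atTop atTop)
    (hW : ∃ M : ℝ, ∀ k, W (n - 1) k ≤ M * (volume (A k)).toReal ^ ((1 : ℝ) / n))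
    (hAF : ∃ c : ℕ → ℝ, ∀ j ≤ n, ∀ k, W (n - j) k ≤ c j * (W (n - 1) k) ^ j)
    (L : ℝ) (hL : 0 < L)
    (hCk : ∀ k, A k ⊆ Ck k ∧
      Ck k ⊆ A k + (Real.sqrt n * L) • Metric.closedBall (0 : EuclideanSpace ℝ (Fin n)) 1) :
    (∃ K : ℝ, ∀ᶠ k in atTop,
      |(volume (Ck k)).toReal - (volume (A k)).toReal|
        ≤ K * (volume (A k)).toReal ^ (((n : ℝ) - 1) / n)) ∧
    Tendsto (fun k => (volume (Ck k)).toReal / (volume (A k)).toReal) atTop (nhds 1) := by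
  obtain ⟨M, hM⟩ := hW
  obtain ⟨c, hc⟩ := hAF
  set δ : ℝ := Real.sqrt n * L with hδdef
  have hδ : 0 ≤ δ := mul_nonneg (Real.sqrt_nonneg _) hL.le
  set vA : ℕ → ℝ := fun k => (volume (A k)).toReal with hvAdef
  set vC : ℕ → ℝ := fun k => (volume (Ck k)).toReal with hvCdef
  have hvAnn : ∀ k, 0 ≤ vA k := fun k => ENNReal.toReal_nonneg
  set M' : ℝ := max M 0 with hM'def
  set c' : ℕ → ℝ := fun j => max (c j) 0 with hc'def
  have hM'nn : 0 ≤ M' := le_max_right _ _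
  -- finiteness of the enlarged bodies
  have hfin : ∀ k, volume (A k + δ • Metric.closedBall (0 : EuclideanSpace ℝ (Fin n)) 1) < ⊤ :=
    fun k => ((hAcomp k).add ((isCompact_closedBall 0 1).smul δ)).measure_lt_top
  have hCfin : ∀ k, volume (Ck k) < ⊤ := fun k =>
    lt_of_le_of_lt (measure_mono (hCk k).2) (hfin k)
  -- basic volume comparison
  have hlow : ∀ k, vA k ≤ vC k := fun k =>
    ENNReal.toReal_mono (hCfin k).ne (measure_mono (hCk k).1)
  have hup : ∀ k, vC k ≤ vA k + ∑ i ∈ Finset.Icc 1 n, (n.choose i : ℝ) * W i k * δ ^ i :=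
    fun k => le_trans (ENNReal.toReal_mono (hfin k).ne (measure_mono (hCk k).2))
      (hSteiner k δ hδ)
  -- bound each W i k
  have hWbound : ∀ k, 1 ≤ vA k → ∀ i ∈ Finset.Icc 1 n,
      W i k ≤ c' (n - i) * M' ^ (n - i) * vA k ^ (((n : ℝ) - 1) / n) := by
    intro k hk1 i hi
    rw [Finset.mem_Icc] at hi
    have hji : n - (n - i) = i := Nat.sub_sub_self hi.2
    have h1 : W i k ≤ c' (n - i) * (W (n - 1) k) ^ (n - i) := by
      calc W i k = W (n - (n - i)) k := by rw [hji]
        _ ≤ c (n - i) * (W (n - 1) k) ^ (n - i) := hc (n - i) (Nat.sub_le _ _) k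
        _ ≤ c' (n - i) * (W (n - 1) k) ^ (n - i) :=
            mul_le_mul_of_nonneg_right (le_max_left _ _) (pow_nonneg (hWnonneg _ _) _)
    have hWn1 : W (n - 1) k ≤ M' * vA k ^ ((1 : ℝ) / n) :=
      le_trans (hM k) (mul_le_mul_of_nonneg_right (le_max_left _ _)
        (Real.rpow_nonneg (hvAnn k) _))
    have h2 : (W (n - 1) k) ^ (n - i) ≤ (M' * vA k ^ ((1 : ℝ) / n)) ^ (n - i) :=
      pow_le_pow_left₀ (hWnonneg _ _) hWn1 _
    have h3 : (vA k ^ ((1 : ℝ) / n)) ^ (n - i) ≤ vA k ^ (((n : ℝ) - 1) / n) := by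
      rw [← Real.rpow_natCast (vA k ^ ((1 : ℝ) / n)) (n - i), ← Real.rpow_mul (hvAnn k)]
      apply Real.rpow_le_rpow_of_exponent_le hk1
      have hni : ((n - i : ℕ) : ℝ) ≤ (n : ℝ) - 1 := by
        have : (n - i : ℕ) ≤ n - 1 := Nat.sub_le_sub_left hi.1 n
        calc ((n - i : ℕ) : ℝ) ≤ ((n - 1 : ℕ) : ℝ) := Nat.cast_le.2 this
          _ = (n : ℝ) - 1 := by rw [Nat.cast_sub hn]; norm_num
      have hnpos : (0 : ℝ) < n := by exact_mod_cast hn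
      calc (1 : ℝ) / n * ((n - i : ℕ) : ℝ) ≤ (1 : ℝ) / n * ((n : ℝ) - 1) :=
            mul_le_mul_of_nonneg_left hni (by positivity)
        _ = ((n : ℝ) - 1) / n := by ring
    calc W i k ≤ c' (n - i) * (W (n - 1) k) ^ (n - i) := h1
      _ ≤ c' (n - i) * (M' * vA k ^ ((1 : ℝ) / n)) ^ (n - i) :=
          mul_le_mul_of_nonneg_left h2 (le_max_right _ _)
      _ = c' (n - i) * (M' ^ (n - i) * (vA k ^ ((1 : ℝ) / n)) ^ (n - i)) := by
          rw [mul_pow]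
      _ ≤ c' (n - i) * (M' ^ (n - i) * vA k ^ (((n : ℝ) - 1) / n)) := by
          apply mul_le_mul_of_nonneg_left _ (le_max_right _ _)
          exact mul_le_mul_of_nonneg_left h3 (pow_nonneg hM'nn _)
      _ = c' (n - i) * M' ^ (n - i) * vA k ^ (((n : ℝ) - 1) / n) := by ring
  set K : ℝ := ∑ i ∈ Finset.Icc 1 n, (n.choose i : ℝ) * (c' (n - i) * M' ^ (n - i)) * δ ^ i
    with hKdef
  have hKnn : 0 ≤ K := Finset.sum_nonneg fun i _ => by positivity
  -- the key eventual bound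
  have hkey : ∀ k, 1 ≤ vA k → |vC k - vA k| ≤ K * vA k ^ (((n : ℝ) - 1) / n) := by
    intro k hk1
    rw [abs_of_nonneg (sub_nonneg.2 (hlow k))]
    have hsum : ∑ i ∈ Finset.Icc 1 n, (n.choose i : ℝ) * W i k * δ ^ i
        ≤ K * vA k ^ (((n : ℝ) - 1) / n) := by
      rw [hKdef, Finset.sum_mul]
      apply Finset.sum_le_sum
      intro i hi
      have := hWbound k hk1 i hi
      calc (n.choose i : ℝ) * W i k * δ ^ i
          ≤ (n.choose i : ℝ) * (c' (n - i) * M' ^ (n - i) * vA k ^ (((n : ℝ) - 1) / n)) * δ ^ i := by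
            apply mul_le_mul_of_nonneg_right _ (pow_nonneg hδ _)
            exact mul_le_mul_of_nonneg_left this (Nat.cast_nonneg _)
        _ = (n.choose i : ℝ) * (c' (n - i) * M' ^ (n - i)) * δ ^ i * vA k ^ (((n : ℝ) - 1) / n) := by
            ring
    linarith [hup k]
  have hev1 : ∀ᶠ k in atTop, 1 ≤ vA k := hvol.eventually_ge_atTop 1
  constructor
  · exact ⟨K, hev1.mono fun k hk => hkey k hk⟩
  · rw [tendsto_iff_norm_sub_tendsto_zero]
    have hnpos : (0 : ℝ) < n := by exact_mod_cast hn
    have h0 : Tendsto (fun k => K / vA k ^ ((1 : ℝ) / n)) atTop (nhds 0) :=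
      tendsto_const_nhds.div_atTop
        ((tendsto_rpow_atTop (by positivity)).comp hvol)
    apply squeeze_zero' (Eventually.of_forall fun k => norm_nonneg _)
      (hev1.mono fun k hk1 => ?_) h0
    have hvApos : 0 < vA k := lt_of_lt_of_le one_pos hk1
    have hrpos : 0 < vA k ^ (((n : ℝ) - 1) / n) := Real.rpow_pos_of_pos hvApos _
    have hsplit : vA k = vA k ^ (((n : ℝ) - 1) / n) * vA k ^ ((1 : ℝ) / n) := by
      rw [← Real.rpow_add hvApos, ← add_div]
      rw [sub_add_cancel, div_self hnpos.ne', Real.rpow_one]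
    rw [Real.norm_eq_abs]
    have : vC k / vA k - 1 = (vC k - vA k) / vA k := by
      field_simp
    rw [this, abs_div, abs_of_pos hvApos]
    calc |vC k - vA k| / vA k
        ≤ K * vA k ^ (((n : ℝ) - 1) / n) / vA k := by
          gcongr
          exact hkey k hk1
      _ = K / vA k ^ ((1 : ℝ) / n) := by
          rw [div_eq_div_iff hvApos.ne' (Real.rpow_pos_of_pos hvApos _).ne', mul_assoc,
            ← Real.rpow_add hvApos, ← add_div, sub_add_cancel,
            div_self hnpos.ne', Real.rpow_one]
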